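/- Let M be a finite regular left duo monoid, K a field, and e an idempotent of M. Let L_e = {m ∈ M | Mm = Me} be the ℒ-class of e. Inside the monoid algebra KM, the K-linear span N of Me and the K-linear span N' of Me \ L_e are KM-submodules of the left regular module KM, and the quotient KM-module KL_e := N/N' is a projective KM-module. -/

import Mathlib

namespace Stmt11Aux

open MonoidAlgebra Submodule

variable {M : Type*} [Monoid M] {K : Type*} [Field K]

/-- `Rset x = Mx`. -/
def Rset (x : M) : Set M := {y : M | ∃ a : M, y = a * x}

lemma mem_Rset_self (x : M) : x ∈ Rset x := ⟨1, (one_mul x).symm⟩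

lemma Rset_subset_of_mem {z x : M} (h : z ∈ Rset x) : Rset z ⊆ Rset x := by
  obtain ⟨a, rfl⟩ := h
  rintro y ⟨b, rfl⟩
  exact ⟨b * a, (mul_assoc b a x).symm⟩

lemma mul_mem_Rset (m x : M) : m * x ∈ Rset x := ⟨m, rfl⟩

lemma mul_idem_of_mem {f z : M} (hf : f * f = f) (h : z ∈ Rset f) : z * f = z := by
  obtain ⟨a, rfl⟩ := h
  rw [mul_assoc, hf]

lemma of_mul_of (m x : M) :
    (of K M m) * (of K M x) = of K M (m * x) := by
  simp [MonoidAlgebra.of_apply, MonoidAlgebra.single_mul_single]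

lemma single_mul_span_mem {S0 : Set M} (hS0 : ∀ m x, x ∈ S0 → m * x ∈ S0)
    (m : M) {p : MonoidAlgebra K M} (hp : p ∈ span K (⇑(of K M) '' S0)) :
    (of K M m) * p ∈ span K (⇑(of K M) '' S0) := by
  induction hp using Submodule.span_induction with
  | mem x hx =>
    obtain ⟨x, hx, rfl⟩ := hx
    rw [of_mul_of]
    exact subset_span ⟨_, hS0 m x hx, rfl⟩
  | zero => simp
  | add x y _ _ hx hy => rw [mul_add]; exact add_mem hx hy
  | smul k x _ hx => rw [mul_smul_comm]; exact smul_mem _ _ hx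

lemma span_mul_single_mem {S0 : Set M} (hS0 : ∀ x m, x ∈ S0 → x * m ∈ S0)
    (m : M) {p : MonoidAlgebra K M} (hp : p ∈ span K (⇑(of K M) '' S0)) :
    p * (of K M m) ∈ span K (⇑(of K M) '' S0) := by
  induction hp using Submodule.span_induction with
  | mem x hx =>
    obtain ⟨x, hx, rfl⟩ := hx
    rw [of_mul_of]
    exact subset_span ⟨_, hS0 x m hx, rfl⟩
  | zero => simp
  | add x y _ _ hx hy => rw [add_mul]; exact add_mem hx hy
  | smul k x _ hx => rw [smul_mul_assoc]; exact smul_mem _ _ hx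

lemma algebra_mul_span_mem {S0 : Set M} (hS0 : ∀ m x, x ∈ S0 → m * x ∈ S0)
    (a : MonoidAlgebra K M) {p : MonoidAlgebra K M}
    (hp : p ∈ span K (⇑(of K M) '' S0)) :
    a * p ∈ span K (⇑(of K M) '' S0) := by
  induction a using MonoidAlgebra.induction_on with
  | of m => exact single_mul_span_mem hS0 m hp
  | add x y hx hy => rw [add_mul]; exact add_mem hx hy
  | smul k a ha => rw [smul_mul_assoc]; exact smul_mem _ _ ha

/-- The `K`-span of a left-closed subset of `M` is a left ideal of `KM`. -/
def idealSpan (S0 : Set M) (hS0 : ∀ m x, x ∈ S0 → m * x ∈ S0) :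
    Submodule (MonoidAlgebra K M) (MonoidAlgebra K M) where
  carrier := span K (⇑(of K M) '' S0)
  add_mem' := fun ha hb => add_mem ha hb
  zero_mem' := zero_mem _
  smul_mem' := fun a p hp => by
    have : a * p ∈ span K (⇑(of K M) '' S0) := algebra_mul_span_mem hS0 a hp
    simpa [smul_eq_mul] using this

@[simp] lemma mem_idealSpan {S0 : Set M} {hS0} {p : MonoidAlgebra K M} :
    p ∈ idealSpan (K := K) S0 hS0 ↔ p ∈ span K (⇑(of K M) '' S0) := Iff.rfl

section Iset

variable (e : M)

/-- `I = Me \ L_e`. -/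
def Iset : Set M := Rset e \ {x : M | Rset x = Rset e}

variable {e}

lemma Iset_subset (h : (y : M) ∈ Iset e) : Rset y ⊆ Rset e := Rset_subset_of_mem h.1

lemma Iset_ne (h : (y : M) ∈ Iset e) : Rset y ≠ Rset e := h.2

/-- If `z ∈ I` and `Rset w ⊆ Rset z` with `w ∈ Me`... actually: any `w ∈ Rset z` for `z ∈ I`
lies in `I`. -/
lemma mem_Iset_of_Rset_subset {z w : M} (hz : z ∈ Iset e) (hw : w ∈ Rset z) : w ∈ Iset e := by
  constructor
  · exact Iset_subset hz hw
  · intro hL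
    have h1 : Rset w ⊆ Rset z := Rset_subset_of_mem hw
    rw [hL] at h1
    exact Iset_ne hz (le_antisymm (Iset_subset hz) h1)

lemma Iset_left_closed (m : M) {x : M} (hx : x ∈ Iset e) : m * x ∈ Iset e :=
  mem_Iset_of_Rset_subset hx (mul_mem_Rset m x)

lemma Iset_right_closed (hld : ∀ m x : M, ∃ y : M, m * x = y * m)
    {x : M} (m : M) (hx : x ∈ Iset e) : x * m ∈ Iset e := by
  obtain ⟨y, hy⟩ := hld x m
  exact mem_Iset_of_Rset_subset hx ⟨y, hy⟩

lemma Iset_class_stable {z z' : M} (hz : z ∈ Iset e) (h : Rset z' = Rset z) : z' ∈ Iset e :=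
  mem_Iset_of_Rset_subset hz (h ▸ mem_Rset_self z')

end Iset

section Killer

variable [Fintype M]

lemma killer_aux (hreg : ∀ a : M, ∃ x : M, a * x * a = a)
    (hld : ∀ m x : M, ∃ y : M, m * x = y * m) (e : M) :
    ∀ (n : ℕ) (T : Set M), T.ncard ≤ n → T ⊆ Iset e →
      (∀ y ∈ T, ∀ z ∈ Iset e, Rset z ⊆ Rset y → z ∈ T) →
      ∃ v : MonoidAlgebra K M,
        v - 1 ∈ span K (⇑(of K M) '' Iset e) ∧ ∀ y ∈ T, (of K M y) * v = 0 := by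
  intro n
  induction n with
  | zero =>
    intro T hcard _ _
    have : T = ∅ := (Set.ncard_eq_zero (Set.toFinite T)).mp (Nat.le_zero.mp hcard)
    exact ⟨1, by simp, by simp [this]⟩
  | succ n ih =>
    intro T hcard hTI hTdown
    rcases T.eq_empty_or_nonempty with rfl | hTne
    · exact ⟨1, by simp, by simp⟩
    -- pick a maximal element
    obtain ⟨y₀, hy₀T, hy₀max⟩ := Set.exists_max_image T (fun z => (Rset z).ncard)
      (Set.toFinite T) hTne
    have hmax : ∀ z ∈ T, Rset y₀ ⊆ Rset z → Rset y₀ = Rset z := by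
      intro z hz hsub
      exact (Set.eq_of_subset_of_ncard_le hsub (hy₀max z hz)).symm ▸ rfl
    set T' : Set M := {z ∈ T | Rset z ≠ Rset y₀} with hT'
    have hT'subT : T' ⊆ T := fun z hz => hz.1
    have hT'card : T'.ncard ≤ n := by
      have hss : T' ⊂ T := by
        refine ⟨hT'subT, fun habs => ?_⟩
        have : y₀ ∈ T' := habs hy₀T
        exact this.2 rfl
      have := Set.ncard_lt_ncard hss (Set.toFinite T)
      omega
    have hT'I : T' ⊆ Iset e := fun z hz => hTI (hT'subT hz)
    have hT'down : ∀ y ∈ T', ∀ z ∈ Iset e, Rset z ⊆ Rset y → z ∈ T' := by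
      intro y hy z hzI hsub
      refine ⟨hTdown y hy.1 z hzI hsub, fun habs => ?_⟩
      have h2 : Rset y₀ ⊆ Rset y := habs ▸ hsub
      exact hy.2 (hmax y hy.1 h2).symm
    obtain ⟨v', hv'1, hv'0⟩ := ih T' hT'card hT'I hT'down
    -- idempotent in the class of y₀
    obtain ⟨x, hx⟩ := hreg y₀
    set f := x * y₀ with hf
    have hff : f * f = f := by
      rw [hf]
      rw [mul_assoc, ← mul_assoc y₀ x y₀, hx]
    have hRf : Rset f = Rset y₀ := by
      apply le_antisymm
      · exact Rset_subset_of_mem ⟨x, rfl⟩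
      · apply Rset_subset_of_mem
        exact ⟨y₀, by rw [hf, ← mul_assoc, hx]⟩
    have hfI : f ∈ Iset e := Iset_class_stable (hTI hy₀T) hRf
    refine ⟨(1 - of K M f) * v', ?_, ?_⟩
    · have h1 : (1 - of K M f) * v' - 1
          = (v' - 1) - ((of K M f) * (v' - 1) + of K M f) := by noncomm_ring
      rw [h1]
      refine sub_mem hv'1 (add_mem ?_ (subset_span ⟨f, hfI, rfl⟩))
      exact single_mul_span_mem (fun m x hx => Iset_left_closed m hx) f hv'1
    · intro y hyT
      have hkey : of K M y * ((1 - of K M f) * v')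
          = (of K M y - of K M (y * f)) * v' := by
        rw [← mul_assoc, mul_sub, mul_one, of_mul_of]
      rw [hkey]
      by_cases hC : Rset y = Rset y₀
      · have : y * f = y := mul_idem_of_mem hff (by rw [hRf, ← hC]; exact mem_Rset_self y)
        rw [this, sub_self, zero_mul]
      · have hyT' : y ∈ T' := ⟨hyT, hC⟩
        have hyfI : y * f ∈ Iset e := Iset_right_closed hld f (hTI hyT)
        obtain ⟨w, hw⟩ := hld y f
        have hyfmem : y * f ∈ Rset y := ⟨w, hw⟩
        have hyfT : y * f ∈ T := hTdown y hyT _ hyfI (Rset_subset_of_mem hyfmem)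
        have hyfT' : y * f ∈ T' := by
          refine ⟨hyfT, fun habs => ?_⟩
          have h2 : Rset y₀ ⊆ Rset y := habs ▸ Rset_subset_of_mem hyfmem
          exact hC (hmax y hyT h2).symm
        rw [sub_mul, hv'0 y hyT', hv'0 _ hyfT', sub_self]

lemma killer (hreg : ∀ a : M, ∃ x : M, a * x * a = a)
    (hld : ∀ m x : M, ∃ y : M, m * x = y * m) (e : M) :
    ∃ v : MonoidAlgebra K M,
      v - 1 ∈ span K (⇑(of K M) '' Iset e) ∧
      ∀ y ∈ Iset e, (of K M y) * v = 0 :=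
  killer_aux hreg hld e (Iset e).ncard (Iset e) le_rfl (fun _ h => h)
    (fun _ _ z hz _ => hz)

end Killer
section Main

variable [Fintype M]

theorem main (hreg : ∀ a : M, ∃ x : M, a * x * a = a)
    (hld : ∀ m x : M, ∃ y : M, m * x = y * m)
    (e : M) (he : IsIdempotentElem e)
    (hSleft : ∀ m x : M, x ∈ Rset e → m * x ∈ Rset e)
    (hIleft : ∀ m x : M, x ∈ Iset e → m * x ∈ Iset e) :
    Module.Projective (MonoidAlgebra K M)
      (↥(idealSpan (K := K) (Rset e) hSleft) ⧸
        Submodule.comap (idealSpan (K := K) (Rset e) hSleft).subtype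
          (idealSpan (K := K) (Iset e) hIleft)) := by
  classical
  set A := MonoidAlgebra K M with hA
  set N : Submodule A A := idealSpan (Rset e) hSleft with hN
  set N' : Submodule A A := idealSpan (Iset e) hIleft with hN'
  set N'' : Submodule A N := Submodule.comap N.subtype N' with hN''
  obtain ⟨v, hv1, hv0⟩ := killer (K := K) hreg hld e
  have heN : of K M e ∈ N := subset_span ⟨e, mem_Rset_self e, rfl⟩
  -- right multiplication by `v` kills `N'`
  have hkill : ∀ p ∈ span K (⇑(of K M) '' Iset e), p * v = 0 := by
    intro p hp
    induction hp using Submodule.span_induction with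
    | mem x hx => obtain ⟨y, hy, rfl⟩ := hx; exact hv0 y hy
    | zero => simp
    | add a b _ _ ha hb => rw [add_mul, ha, hb, add_zero]
    | smul k a _ ha => rw [smul_mul_assoc, ha, smul_zero]
  -- the key congruence
  have hIright : ∀ x m : M, x ∈ Iset e → x * m ∈ Iset e :=
    fun x m hx => Iset_right_closed hld m hx
  have hcong : ∀ p ∈ span K (⇑(of K M) '' Rset e),
      p * v * of K M e - p ∈ span K (⇑(of K M) '' Iset e) := by
    intro p hp
    induction hp using Submodule.span_induction with
    | mem x hx =>
      obtain ⟨x, hx, rfl⟩ := hx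
      obtain ⟨a, rfl⟩ := hx
      have h1 : of K M (a * e) * of K M e = of K M (a * e) := by
        rw [of_mul_of, mul_assoc, he.eq]
      have key : of K M (a * e) * v * of K M e - of K M (a * e)
          = of K M (a * e) * (v - 1) * of K M e := by
        conv_rhs => rw [mul_sub, mul_one, sub_mul, h1]
      rw [key]
      exact span_mul_single_mem hIright e
        (single_mul_span_mem (fun m x hx => Iset_left_closed m hx) (a * e) hv1)
    | zero => simp
    | add a b _ _ ha hb =>
      have h2 : (a + b) * v * of K M e - (a + b)
          = (a * v * of K M e - a) + (b * v * of K M e - b) := by noncomm_ring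
      rw [h2]; exact add_mem ha hb
    | smul k a _ ha =>
      have h2 : (k • a) * v * of K M e - k • a = k • (a * v * of K M e - a) := by
        rw [smul_mul_assoc, smul_mul_assoc, ← smul_sub]
      rw [h2]; exact smul_mem _ _ ha
  -- the splitting maps
  let s : A →ₗ[A] (N ⧸ N'') :=
    N''.mkQ.comp (LinearMap.toSpanSingleton A N ⟨of K M e, heN⟩)
  let j : N →ₗ[A] A := (LinearMap.toSpanSingleton A A v).comp N.subtype
  have hker : N'' ≤ LinearMap.ker j := by
    intro n hn
    have : (n : A) * v = 0 := hkill _ hn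
    simpa [j, LinearMap.toSpanSingleton_apply, smul_eq_mul] using this
  let i : (N ⧸ N'') →ₗ[A] A := N''.liftQ j hker
  have hsplit : s.comp i = LinearMap.id := by
    apply LinearMap.ext
    intro q
    obtain ⟨n, rfl⟩ := Submodule.mkQ_surjective N'' q
    rw [LinearMap.comp_apply, LinearMap.id_apply]
    have h3 : i (N''.mkQ n) = (n : A) * v := by
      simp [i, j, Submodule.liftQ_apply, LinearMap.toSpanSingleton_apply, smul_eq_mul]
    rw [h3]
    show N''.mkQ (((n : A) * v) • (⟨of K M e, heN⟩ : N)) = N''.mkQ n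
    rw [Submodule.mkQ_apply, Submodule.mkQ_apply, Submodule.Quotient.eq]
    have h4 : ((((n : A) * v) • (⟨of K M e, heN⟩ : N)) - n : N) ∈ N'' := by
      rw [hN'', Submodule.mem_comap]
      have : (((((n : A) * v) • (⟨of K M e, heN⟩ : N)) - n : N) : A)
          = (n : A) * v * of K M e - (n : A) := by
        simp [smul_eq_mul]
      rw [Submodule.subtype_apply, this]
      exact hcong (n : A) n.2
    exact h4
  exact Module.Projective.of_split i s hsplit

end Main
end Stmt11Aux

open Stmt11Aux in


/-- Let `M` be a finite regular left duo monoid, `K` a field and `e` an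
idempotent of `M`, with ℒ-class `L_e = {m | Mm = Me}`.  Inside `KM`, the `K`-span `N` of
`Me` and the `K`-span `N'` of `Me \ L_e` are `KM`-submodules of the left regular module,
and the quotient `KM`-module `KL_e = N/N'` is projective. -/
theorem stmt_11 (M : Type*) [Monoid M] [Fintype M] (K : Type*) [Field K]
    (hreg : ∀ a : M, ∃ x : M, a * x * a = a)
    (hld : ∀ m x : M, ∃ y : M, m * x = y * m)
    (e : M) (he : IsIdempotentElem e) :
    ∃ N N' : Submodule (MonoidAlgebra K M) (MonoidAlgebra K M),
      (N : Set (MonoidAlgebra K M)) =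
        ↑(Submodule.span K (⇑(MonoidAlgebra.of K M) '' {x : M | ∃ a : M, x = a * e})) ∧
      (N' : Set (MonoidAlgebra K M)) =
        ↑(Submodule.span K (⇑(MonoidAlgebra.of K M) ''
          ({x : M | ∃ a : M, x = a * e} \
            {x : M | {y : M | ∃ a : M, y = a * x} = {y : M | ∃ a : M, y = a * e}}))) ∧
      Module.Projective (MonoidAlgebra K M) (↥N ⧸ Submodule.comap N.subtype N') := by
  have hSleft : ∀ m x : M, x ∈ Rset e → m * x ∈ Rset e := by
    rintro m x ⟨a, rfl⟩
    exact ⟨m * a, (mul_assoc m a e).symm⟩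
  have hIleft : ∀ m x : M, x ∈ Iset e → m * x ∈ Iset e :=
    fun m x hx => Iset_left_closed m hx
  refine ⟨idealSpan (K := K) (Rset e) hSleft, idealSpan (K := K) (Iset e) hIleft,
    rfl, rfl, ?_⟩
  exact main hreg hld e he hSleft hIleft
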